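/- Let n ≥ 1, let F : ℝ^{4n} → ℝ and φ : ℝ → ℝ be smooth, and set f = φ ∘ F. Then for every x ∈ ℝ^{4n}: P_f(x)(∇f(x)) = φ'(F(x))²·P_F(x)(∇F(x)) + φ'(F(x))·φ'''(F(x))·|∇F(x)|⁴ + 2φ'(F(x))·φ''(F(x))·D²F(x)[∇F(x), ∇F(x)] + φ'(F(x))·φ''(F(x))·|∇F(x)|²·ΔF(x). -/

import Mathlib

open scoped RealInnerProductSpace

noncomputable section

/-- `ℝ^{4n}` identified with `ℍⁿ`: the `4n` real coordinates are indexed by pairs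
`(a, t)` where `a` numbers the quaternionic component and `t ∈ {0,1,2,3}` the
real coordinates `1, i, j, k` of that quaternion. -/
abbrev Qn (n : ℕ) := EuclideanSpace ℝ (Fin n × Fin 4)

/-- The three almost complex structures `I₁, I₂, I₃` on `ℝ^{4n} = ℍⁿ`, given by
componentwise left multiplication by the quaternion units `i, j, k`. -/
def Iop (n : ℕ) (s : Fin 3) (x : Qn n) : Qn n := WithLp.toLp 2 (fun p : Fin n × Fin 4 =>
  ![ ![ -x (p.1, 1),  x (p.1, 0), -x (p.1, 3),  x (p.1, 2) ],
     ![ -x (p.1, 2),  x (p.1, 3),  x (p.1, 0), -x (p.1, 1) ],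
     ![ -x (p.1, 3), -x (p.1, 2),  x (p.1, 1),  x (p.1, 0) ] ] s p.2)

/-- The standard orthonormal basis of `ℝ^{4n}`. -/
def eQ (n : ℕ) (p : Fin n × Fin 4) : Qn n := EuclideanSpace.single p 1

/-- Second Fréchet derivative as a bilinear form. -/
def D2Q (n : ℕ) (g : Qn n → ℝ) (x X Y : Qn n) : ℝ := iteratedFDeriv ℝ 2 g x ![X, Y]

/-- Third Fréchet derivative as a trilinear form. -/
def D3Q (n : ℕ) (g : Qn n → ℝ) (x Z X Y : Qn n) : ℝ := iteratedFDeriv ℝ 3 g x ![Z, X, Y]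

/-- The Laplacian `Δg(x) = Σ_a D²g(x)[e_a, e_a]`. -/
def lapQ (n : ℕ) (g : Qn n → ℝ) (x : Qn n) : ℝ := ∑ p, D2Q n g x (eQ n p) (eQ n p)

/-- The flat quaternionic P-form
`P_g(x)(Z) = Σ_b D³g(x)[Z,e_b,e_b] + Σ_{s=1}^3 Σ_b D³g(x)[I_s Z, e_b, I_s e_b]`. -/
def PQ (n : ℕ) (g : Qn n → ℝ) (x Z : Qn n) : ℝ :=
  (∑ b, D3Q n g x Z (eQ n b) (eQ n b)) +
    ∑ s : Fin 3, ∑ b, D3Q n g x (Iop n s Z) (eQ n b) (Iop n s (eQ n b))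


def IopL (n : ℕ) (s : Fin 3) : Qn n →ₗ[ℝ] Qn n where
  toFun := Iop n s
  map_add' := by
    intro v w; ext p; obtain ⟨a, t⟩ := p
    fin_cases s <;> fin_cases t <;>
      simp [Iop, PiLp.add_apply] <;> ring
  map_smul' := by
    intro c v; ext p; obtain ⟨a, t⟩ := p
    fin_cases s <;> fin_cases t <;>
      simp [Iop, PiLp.smul_apply, smul_eq_mul] <;> ring

lemma Iop_smul (n : ℕ) (s : Fin 3) (c : ℝ) (v : Qn n) :
    Iop n s (c • v) = c • Iop n s v := map_smul (IopL n s) c v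

lemma Iop_sum (n : ℕ) (s : Fin 3) (c : Fin n × Fin 4 → ℝ) (v : Fin n × Fin 4 → Qn n) :
    Iop n s (∑ b, c b • v b) = ∑ b, c b • Iop n s (v b) := by
  have h := map_sum (IopL n s) (fun b => c b • v b) Finset.univ
  simp only [map_smul] at h
  exact h

lemma Iop_skew (n : ℕ) (s : Fin 3) (v w : Qn n) : ⟪Iop n s v, w⟫ = -⟪v, Iop n s w⟫ := by
  simp only [PiLp.inner_apply, RCLike.inner_apply, conj_trivial]
  rw [Fintype.sum_prod_type, Fintype.sum_prod_type, ← Finset.sum_neg_distrib]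
  refine Finset.sum_congr rfl fun a _ => ?_
  rw [Fin.sum_univ_four, Fin.sum_univ_four]
  fin_cases s <;> simp [Iop] <;> ring

lemma hcoord (n : ℕ) (w : Qn n) (b : Fin n × Fin 4) : ⟪w, eQ n b⟫ = w b := by
  simp [eQ, EuclideanSpace.inner_single_right]

lemma hrepr (n : ℕ) (w : Qn n) : ∑ b, w b • eQ n b = w := by
  simpa [eQ, EuclideanSpace.basisFun_apply, EuclideanSpace.basisFun_repr] using
    (EuclideanSpace.basisFun (Fin n × Fin 4) ℝ).sum_repr w

lemma sum_mul_self (n : ℕ) (v : Qn n) : ∑ b, v b * v b = ‖v‖ ^ 2 := by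
  rw [← real_inner_self_eq_norm_sq]
  simp only [PiLp.inner_apply, RCLike.inner_apply, conj_trivial]
def d2 (n : ℕ) (g : Qn n → ℝ) (x X Y : Qn n) : ℝ :=
  fderiv ℝ (fun y => fderiv ℝ g y Y) x X
def d3 (n : ℕ) (g : Qn n → ℝ) (x Z X Y : Qn n) : ℝ :=
  fderiv ℝ (fun y => d2 n g y X Y) x Z

lemma wtle1 : ((⊤ : ℕ∞) : WithTop ℕ∞) ≠ 0 := by
  simp
lemma wtleS : ((⊤ : ℕ∞) : WithTop ℕ∞) + 1 ≤ ((⊤ : ℕ∞) : WithTop ℕ∞) := le_of_eq rfl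
lemma wtle2 : ((⊤ : ℕ∞) : WithTop ℕ∞) + ((2 : ℕ) : WithTop ℕ∞) ≤ ((⊤ : ℕ∞) : WithTop ℕ∞) :=
  le_of_eq rfl

lemma smooth_dF {n : ℕ} {g : Qn n → ℝ} (hg : ContDiff ℝ (⊤ : ℕ∞) g) (Y : Qn n) :
    ContDiff ℝ (⊤ : ℕ∞) (fun y => fderiv ℝ g y Y) :=
  (hg.fderiv_right wtleS).clm_apply contDiff_const

lemma smooth_d2 {n : ℕ} {g : Qn n → ℝ} (hg : ContDiff ℝ (⊤ : ℕ∞) g) (X Y : Qn n) :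
    ContDiff ℝ (⊤ : ℕ∞) (fun y => d2 n g y X Y) :=
  smooth_dF (smooth_dF hg Y) X

lemma D2Q_eq {n : ℕ} {g : Qn n → ℝ} (hg : ContDiff ℝ (⊤ : ℕ∞) g) (x X Y : Qn n) :
    D2Q n g x X Y = d2 n g x X Y := by
  rw [D2Q, iteratedFDeriv_two_apply, d2,
    fderiv_clm_apply ((hg.fderiv_right wtleS).differentiable wtle1 x)
      (differentiableAt_const Y)]
  simp

lemma D3Q_eq {n : ℕ} {g : Qn n → ℝ} (hg : ContDiff ℝ (⊤ : ℕ∞) g) (x Z X Y : Qn n) :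
    D3Q n g x Z X Y = d3 n g x Z X Y := by
  have h2 : ContDiff ℝ (⊤ : ℕ∞) (iteratedFDeriv ℝ 2 g) := hg.iteratedFDeriv_right wtle2
  rw [D3Q, iteratedFDeriv_succ_apply_left,
    ← fderiv_continuousMultilinear_apply_const_apply
      (h2.differentiable wtle1 x) (Fin.tail ![Z, X, Y]) (![Z, X, Y] 0)]
  have ht : Fin.tail ![Z, X, Y] = ![X, Y] := by
    funext i; fin_cases i <;> rfl
  have hfun : (fun y => iteratedFDeriv ℝ 2 g y (Fin.tail ![Z, X, Y])) =
      fun y => d2 n g y X Y := by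
    funext y
    rw [ht, show iteratedFDeriv ℝ 2 g y ![X, Y] = D2Q n g y X Y from rfl, D2Q_eq hg]
  rw [hfun]
  rfl

lemma d3_smul {n : ℕ} (g : Qn n → ℝ) (x : Qn n) (c : ℝ) (Z X Y : Qn n) :
    d3 n g x (c • Z) X Y = c * d3 n g x Z X Y := by
  rw [d3, d3, map_smul, smul_eq_mul]

lemma chain1 {n : ℕ} {G : Qn n → ℝ} {ψ : ℝ → ℝ} (hG : Differentiable ℝ G)
    (hψ : Differentiable ℝ ψ) (x X : Qn n) :
    fderiv ℝ (fun y => ψ (G y)) x X = deriv ψ (G x) * fderiv ℝ G x X := by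
  have h : fderiv ℝ (ψ ∘ G) x = (fderiv ℝ ψ (G x)).comp (fderiv ℝ G x) :=
    fderiv_comp x (hψ (G x)) (hG x)
  rw [show (fun y => ψ (G y)) = ψ ∘ G from rfl, h]
  simp only [ContinuousLinearMap.comp_apply]
  rw [show fderiv ℝ G x X = (fderiv ℝ G x X) • (1 : ℝ) by simp, map_smul]
  simp [fderiv_apply_one_eq_deriv, smul_eq_mul, mul_comm]

lemma mymul {E : Type*} [NormedAddCommGroup E] [NormedSpace ℝ E] {a b : E → ℝ} {x : E}
    (ha : DifferentiableAt ℝ a x) (hb : DifferentiableAt ℝ b x) (X : E) :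
    fderiv ℝ (fun y => a y * b y) x X = a x * fderiv ℝ b x X + b x * fderiv ℝ a x X := by
  rw [fderiv_fun_mul ha hb]
  simp only [ContinuousLinearMap.add_apply, ContinuousLinearMap.smul_apply, smul_eq_mul]

lemma d2sum {n : ℕ} {F : Qn n → ℝ} (hF : ContDiff ℝ (⊤ : ℕ∞) F) (x : Qn n) (X : Qn n)
    (c : Fin n × Fin 4 → ℝ) (v : Fin n × Fin 4 → Qn n) :
    d2 n F x X (∑ b, c b • v b) = ∑ b, c b * d2 n F x X (v b) := by
  rw [d2]
  have hfun : (fun y => fderiv ℝ F y (∑ b, c b • v b)) =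
      fun y => ∑ b, c b * fderiv ℝ F y (v b) := by
    funext y
    rw [map_sum]
    exact Finset.sum_congr rfl fun b _ => by rw [map_smul, smul_eq_mul]
  rw [hfun, fderiv_fun_sum (fun b _ =>
    ((smooth_dF hF (v b)).differentiable wtle1 x).const_mul (c b))]
  rw [ContinuousLinearMap.sum_apply]
  exact Finset.sum_congr rfl fun b _ => by
    rw [fderiv_const_mul ((smooth_dF hF (v b)).differentiable wtle1 x)]
    simp [d2]

/-- the P-function after a change of the dependent variable, `f = φ ∘ F`. -/
theorem qc_P_function_chain_rule (n : ℕ) (hn : 1 ≤ n) (F : Qn n → ℝ) (φ : ℝ → ℝ)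
    (hF : ContDiff ℝ (⊤ : ℕ∞) F) (hφ : ContDiff ℝ (⊤ : ℕ∞) φ)
    (f : Qn n → ℝ) (hf : f = φ ∘ F) (x : Qn n) :
    PQ n f x (gradient f x) =
      deriv φ (F x) ^ 2 * PQ n F x (gradient F x)
      + deriv φ (F x) * deriv^[3] φ (F x) * ‖gradient F x‖ ^ 4
      + 2 * deriv φ (F x) * deriv^[2] φ (F x) *
          D2Q n F x (gradient F x) (gradient F x)
      + deriv φ (F x) * deriv^[2] φ (F x) * ‖gradient F x‖ ^ 2 * lapQ n F x := by
  subst hf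
  have hφ1 : ContDiff ℝ (⊤ : ℕ∞) (deriv φ) := (contDiff_infty_iff_deriv.mp hφ).2
  have hφ2 : ContDiff ℝ (⊤ : ℕ∞) (deriv (deriv φ)) := (contDiff_infty_iff_deriv.mp hφ1).2
  have hfC : ContDiff ℝ (⊤ : ℕ∞) (φ ∘ F) := hφ.comp hF
  have hFd : Differentiable ℝ F := hF.differentiable wtle1
  have hφd : Differentiable ℝ φ := hφ.differentiable wtle1
  have hφ1d : Differentiable ℝ (deriv φ) := hφ1.differentiable wtle1
  have hφ2d : Differentiable ℝ (deriv (deriv φ)) := hφ2.differentiable wtle1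
  -- first order chain rule
  have hA : ∀ (y Y : Qn n), fderiv ℝ (φ ∘ F) y Y = deriv φ (F y) * fderiv ℝ F y Y :=
    fun y Y => chain1 hFd hφd y Y
  -- second order chain rule
  have hB : ∀ (y : Qn n) (X Y : Qn n), d2 n (φ ∘ F) y X Y =
      deriv (deriv φ) (F y) * fderiv ℝ F y X * fderiv ℝ F y Y
        + deriv φ (F y) * d2 n F y X Y := by
    intro y X Y
    rw [d2]
    have hfun : (fun z => fderiv ℝ (φ ∘ F) z Y) =
        fun z => deriv φ (F z) * fderiv ℝ F z Y := funext fun z => hA z Y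
    have dA : DifferentiableAt ℝ (fun z => deriv φ (F z)) y :=
      (hφ1.comp hF).differentiable wtle1 y
    have dB : DifferentiableAt ℝ (fun z => fderiv ℝ F z Y) y :=
      (smooth_dF hF Y).differentiable wtle1 y
    rw [hfun, mymul dA dB, chain1 hFd hφ1d]
    rw [show fderiv ℝ (fun z => fderiv ℝ F z Y) y X = d2 n F y X Y from rfl]
    ring
  -- third order chain rule
  have hC : ∀ (Z X Y : Qn n), d3 n (φ ∘ F) x Z X Y =
      deriv (deriv (deriv φ)) (F x) * fderiv ℝ F x Z * fderiv ℝ F x X * fderiv ℝ F x Y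
      + deriv (deriv φ) (F x) * (d2 n F x Z X * fderiv ℝ F x Y
          + fderiv ℝ F x X * d2 n F x Z Y + fderiv ℝ F x Z * d2 n F x X Y)
      + deriv φ (F x) * d3 n F x Z X Y := by
    intro Z X Y
    rw [d3]
    have hfun : (fun y => d2 n (φ ∘ F) y X Y) = fun y =>
        (deriv (deriv φ) (F y) * fderiv ℝ F y X) * fderiv ℝ F y Y
          + deriv φ (F y) * d2 n F y X Y := by
      funext y; rw [hB y X Y]
    have dq1 : DifferentiableAt ℝ (fun y => deriv (deriv φ) (F y) * fderiv ℝ F y X) x :=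
      ((hφ2.comp hF).mul (smooth_dF hF X)).differentiable wtle1 x
    have dq2 : DifferentiableAt ℝ (fun y => fderiv ℝ F y Y) x :=
      (smooth_dF hF Y).differentiable wtle1 x
    have dq3 : DifferentiableAt ℝ (fun y => deriv φ (F y)) x :=
      ((hφ1.comp hF)).differentiable wtle1 x
    have dq4 : DifferentiableAt ℝ (fun y => d2 n F y X Y) x :=
      (smooth_d2 hF X Y).differentiable wtle1 x
    have dq5 : DifferentiableAt ℝ (fun y => deriv (deriv φ) (F y)) x :=
      (hφ2.comp hF).differentiable wtle1 x
    have dq6 : DifferentiableAt ℝ (fun y => fderiv ℝ F y X) x :=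
      (smooth_dF hF X).differentiable wtle1 x
    rw [hfun, fderiv_fun_add (dq1.fun_mul dq2) (dq3.fun_mul dq4), ContinuousLinearMap.add_apply,
      mymul dq1 dq2, mymul dq5 dq6, mymul dq3 dq4,
      chain1 hFd hφ1d x Z, chain1 hFd hφ2d x Z]
    rw [show fderiv ℝ (fun y => fderiv ℝ F y X) x Z = d2 n F x Z X from rfl,
      show fderiv ℝ (fun y => fderiv ℝ F y Y) x Z = d2 n F x Z Y from rfl,
      show fderiv ℝ (fun y => d2 n F y X Y) x Z = d3 n F x Z X Y from rfl]
    ring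
  -- gradient facts
  have ginner : ∀ (g : Qn n → ℝ) (Y : Qn n), fderiv ℝ g x Y = ⟪gradient g x, Y⟫ := by
    intro g Y
    rw [show gradient g x = (InnerProductSpace.toDual ℝ (Qn n)).symm (fderiv ℝ g x) from rfl,
      InnerProductSpace.toDual_symm_apply]
  have hgradf : gradient (φ ∘ F) x = deriv φ (F x) • gradient F x := by
    refine ext_inner_right ℝ fun v => ?_
    rw [← ginner, hA, real_inner_smul_left, ← ginner]
  have hdFG : fderiv ℝ F x (gradient F x) = ‖gradient F x‖ ^ 2 := by
    rw [ginner, real_inner_self_eq_norm_sq]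
  have hdFe : ∀ b, fderiv ℝ F x (eQ n b) = gradient F x b := fun b => by
    rw [ginner, hcoord]
  have hskewself : ∀ (s : Fin 3) (v : Qn n), ⟪v, Iop n s v⟫ = 0 := by
    intro s v
    have h1 := Iop_skew n s v v
    have h2 := real_inner_comm (Iop n s v) v
    linarith
  have hdFIG : ∀ s, fderiv ℝ F x (Iop n s (gradient F x)) = 0 := fun s => by
    rw [ginner, hskewself]
  have hdFIe : ∀ s b, fderiv ℝ F x (Iop n s (eQ n b)) = -(Iop n s (gradient F x) b) := by
    intro s b
    have h := Iop_skew n s (gradient F x) (eQ n b)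
    rw [hcoord] at h
    rw [ginner]
    linarith
  -- sum identities
  have hsum1 : ∑ b, gradient F x b * gradient F x b = ‖gradient F x‖ ^ 2 :=
    sum_mul_self n (gradient F x)
  have hd2GG : ∑ b, gradient F x b * d2 n F x (gradient F x) (eQ n b)
      = d2 n F x (gradient F x) (gradient F x) := by
    have h := d2sum hF x (gradient F x) (fun b => gradient F x b) (eQ n)
    rw [hrepr n (gradient F x)] at h
    exact h.symm
  have hd2W : ∀ s, ∑ b, Iop n s (gradient F x) b * d2 n F x (Iop n s (gradient F x)) (eQ n b)
      = d2 n F x (Iop n s (gradient F x)) (Iop n s (gradient F x)) := by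
    intro s
    have h := d2sum hF x (Iop n s (gradient F x)) (fun b => Iop n s (gradient F x) b) (eQ n)
    rw [hrepr n (Iop n s (gradient F x))] at h
    exact h.symm
  have hd2W' : ∀ s, ∑ b,
      gradient F x b * d2 n F x (Iop n s (gradient F x)) (Iop n s (eQ n b))
      = d2 n F x (Iop n s (gradient F x)) (Iop n s (gradient F x)) := by
    intro s
    have h := d2sum hF x (Iop n s (gradient F x)) (fun b => gradient F x b)
      (fun b => Iop n s (eQ n b))
    have h2 : Iop n s (∑ b, gradient F x b • eQ n b) = ∑ b, gradient F x b • Iop n s (eQ n b) :=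
      Iop_sum n s (fun b => gradient F x b) (eQ n)
    rw [hrepr n (gradient F x)] at h2
    rw [← h2] at h
    exact h.symm
  -- iterates of deriv
  have h2it : deriv^[2] φ = deriv (deriv φ) := rfl
  have h3it : deriv^[3] φ = deriv (deriv (deriv φ)) := rfl
  -- unfold and convert everything to nested fderiv form
  simp only [PQ, lapQ, h2it, h3it, D3Q_eq hfC, D3Q_eq hF, D2Q_eq hF, hgradf, Iop_smul, d3_smul]
  -- the diagonal part
  have key1 : ∑ b, deriv φ (F x) * d3 n (φ ∘ F) x (gradient F x) (eQ n b) (eQ n b)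
      = deriv φ (F x) ^ 2 * (∑ b, d3 n F x (gradient F x) (eQ n b) (eQ n b))
        + deriv φ (F x) * deriv (deriv (deriv φ)) (F x) * ‖gradient F x‖ ^ 4
        + 2 * deriv φ (F x) * deriv (deriv φ) (F x)
            * d2 n F x (gradient F x) (gradient F x)
        + deriv φ (F x) * deriv (deriv φ) (F x) * ‖gradient F x‖ ^ 2
            * (∑ b, d2 n F x (eQ n b) (eQ n b)) := by
    have hb : ∀ b, deriv φ (F x) * d3 n (φ ∘ F) x (gradient F x) (eQ n b) (eQ n b) =
        (deriv φ (F x) * deriv (deriv (deriv φ)) (F x) * ‖gradient F x‖ ^ 2)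
            * (gradient F x b * gradient F x b)
        + (2 * deriv φ (F x) * deriv (deriv φ) (F x))
            * (gradient F x b * d2 n F x (gradient F x) (eQ n b))
        + (deriv φ (F x) * deriv (deriv φ) (F x) * ‖gradient F x‖ ^ 2)
            * d2 n F x (eQ n b) (eQ n b)
        + deriv φ (F x) ^ 2 * d3 n F x (gradient F x) (eQ n b) (eQ n b) := by
      intro b
      rw [hC, hdFG, hdFe]
      ring
    rw [Finset.sum_congr rfl fun b _ => hb b]
    rw [Finset.sum_add_distrib, Finset.sum_add_distrib, Finset.sum_add_distrib,
      ← Finset.mul_sum, ← Finset.mul_sum, ← Finset.mul_sum, ← Finset.mul_sum,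
      hsum1, hd2GG]
    ring
  -- the twisted part
  have key2 : ∀ s, ∑ b, deriv φ (F x)
        * d3 n (φ ∘ F) x (Iop n s (gradient F x)) (eQ n b) (Iop n s (eQ n b))
      = deriv φ (F x) ^ 2
        * ∑ b, d3 n F x (Iop n s (gradient F x)) (eQ n b) (Iop n s (eQ n b)) := by
    intro s
    have hb : ∀ b, deriv φ (F x)
          * d3 n (φ ∘ F) x (Iop n s (gradient F x)) (eQ n b) (Iop n s (eQ n b)) =
        (deriv φ (F x) * deriv (deriv φ) (F x))
          * (gradient F x b * d2 n F x (Iop n s (gradient F x)) (Iop n s (eQ n b))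
            - Iop n s (gradient F x) b * d2 n F x (Iop n s (gradient F x)) (eQ n b))
        + deriv φ (F x) ^ 2
            * d3 n F x (Iop n s (gradient F x)) (eQ n b) (Iop n s (eQ n b)) := by
      intro b
      rw [hC, hdFIG s, hdFIe s b, hdFe]
      ring
    rw [Finset.sum_congr rfl fun b _ => hb b, Finset.sum_add_distrib,
      ← Finset.mul_sum, ← Finset.mul_sum, Finset.sum_sub_distrib, hd2W' s, hd2W s]
    ring
  rw [key1, Finset.sum_congr rfl fun s _ => key2 s, ← Finset.mul_sum]
  ring
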